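/- Every irreducible sequent that is provable in G3iM^w has a sensible strict proof in G3iM^w. -/
import Mathlib


/-- Formulas of intuitionistic (monotone) modal logic over atoms `ℕ`,
with conjunction, disjunction, implication, falsum and a box modality. -/
inductive Fm : Type where
  | atom : ℕ → Fm
  | bot  : Fm
  | and  : Fm → Fm → Fm
  | or   : Fm → Fm → Fm
  | imp  : Fm → Fm → Fm
  | box  : Fm → Fm
deriving DecidableEq

/-- `⊤` as the abbreviation `⊥ → ⊥`. -/
def Fm.top : Fm := Fm.imp Fm.bot Fm.bot

/-- Derivations in the sequent calculus `G3iM^w`. -/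
inductive D : Multiset Fm → Fm → Type where
  | ax (Γ : Multiset Fm) (p : ℕ) : D (Fm.atom p ::ₘ Γ) (Fm.atom p)
  | lbot (Γ : Multiset Fm) (φ : Fm) : D (Fm.bot ::ₘ Γ) φ
  | land (Γ : Multiset Fm) (φ ψ θ : Fm) :
      D (φ ::ₘ ψ ::ₘ Γ) θ → D (φ.and ψ ::ₘ Γ) θ
  | rand (Γ : Multiset Fm) (φ ψ : Fm) : D Γ φ → D Γ ψ → D Γ (φ.and ψ)
  | lor (Γ : Multiset Fm) (φ ψ θ : Fm) :
      D (φ ::ₘ Γ) θ → D (ψ ::ₘ Γ) θ → D (φ.or ψ ::ₘ Γ) θ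
  | ror₁ (Γ : Multiset Fm) (φ ψ : Fm) : D Γ φ → D Γ (φ.or ψ)
  | ror₂ (Γ : Multiset Fm) (φ ψ : Fm) : D Γ ψ → D Γ (φ.or ψ)
  | limp (Γ : Multiset Fm) (φ ψ θ : Fm) :
      D (φ.imp ψ ::ₘ Γ) φ → D (ψ ::ₘ Γ) θ → D (φ.imp ψ ::ₘ Γ) θ
  | rimp (Γ : Multiset Fm) (φ ψ : Fm) : D (φ ::ₘ Γ) ψ → D Γ (φ.imp ψ)
  | m (Γ : Multiset Fm) (φ ψ : Fm) : D {φ} ψ → D (φ.box ::ₘ Γ) (ψ.box)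

/-- A derivation is sensible if its last inference is not `L→` with a
principal left formula `p → ψ` for an atom `p`. -/
def Sensible {Γ : Multiset Fm} {δ : Fm} (d : D Γ δ) : Prop :=
  match d with
  | .limp _ φ _ _ _ _ => ∀ p, φ ≠ Fm.atom p
  | _ => True

/-- The last inference of the derivation is an axiom or the modal rule `M`. -/
def EndsAxM {Γ : Multiset Fm} {δ : Fm} (d : D Γ δ) : Prop :=
  match d with
  | .ax _ _ => True
  | .lbot _ _ => True
  | .m _ _ _ _ => True
  | _ => False

/-- A derivation is strict if, whenever its last inference is `L→` with a
principal formula `□χ → ψ`, the left premise is an axiom or the conclusion of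
the modal rule `M`. -/
def Strict {Γ : Multiset Fm} {δ : Fm} (d : D Γ δ) : Prop :=
  match d with
  | .limp _ φ _ _ dl _ => (∃ χ, φ = Fm.box χ) → EndsAxM dl
  | _ => True

/-- A multiset is irreducible if it contains no conjunction, disjunction or
`⊥`, and for no atom `p` contains both `p` and `p → ψ`. -/
def Irred (Γ : Multiset Fm) : Prop :=
  (∀ φ ψ : Fm, φ.and ψ ∉ Γ) ∧ (∀ φ ψ : Fm, φ.or ψ ∉ Γ) ∧ Fm.bot ∉ Γ ∧
  (∀ (p : ℕ) (ψ : Fm), ¬ (Fm.atom p ∈ Γ ∧ (Fm.atom p).imp ψ ∈ Γ))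


section SSPAux

/-- Transport a derivation along an equality of contexts. -/
def exch {Γ Γ' : Multiset Fm} {δ : Fm} (h : Γ = Γ') (d : D Γ δ) : D Γ' δ := h ▸ d

lemma exch_endsAxM {Γ Γ' : Multiset Fm} {δ : Fm} (h : Γ = Γ') (d : D Γ δ)
    (hd : EndsAxM d) : EndsAxM (exch h d) := by subst h; exact hd

lemma sensible_limp (Γ : Multiset Fm) (φ ψ δ : Fm)
    (d1 : D (φ.imp ψ ::ₘ Γ) φ) (d2 : D (ψ ::ₘ Γ) δ)
    (h : ∀ p, φ ≠ Fm.atom p) : Sensible (D.limp Γ φ ψ δ d1 d2) := h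

lemma strict_limp (Γ : Multiset Fm) (φ ψ δ : Fm)
    (d1 : D (φ.imp ψ ::ₘ Γ) φ) (d2 : D (ψ ::ₘ Γ) δ)
    (h : (∃ χ, φ = Fm.box χ) → EndsAxM d1) : Strict (D.limp Γ φ ψ δ d1 d2) := h

lemma cons_decomp {a b : Fm} {s t : Multiset Fm} (h : a ::ₘ s = b ::ₘ t) (hne : a ≠ b) :
    ∃ cs, s = b ::ₘ cs ∧ t = a ::ₘ cs :=
  ((Multiset.cons_eq_cons.mp h).resolve_left (fun h' => hne h'.1)).2

lemma sw (a b : Fm) (s : Multiset Fm) : a ::ₘ b ::ₘ s = b ::ₘ a ::ₘ s :=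
  Multiset.cons_swap a b s

lemma rot3 (a b c : Fm) (s : Multiset Fm) : a ::ₘ b ::ₘ c ::ₘ s = b ::ₘ c ::ₘ a ::ₘ s := by
  rw [Multiset.cons_swap a b, Multiset.cons_swap a c]

/-- Height of a derivation. -/
def ht : {Γ : Multiset Fm} → {δ : Fm} → D Γ δ → ℕ
  | _, _, .ax _ _ => 1
  | _, _, .lbot _ _ => 1
  | _, _, .land _ _ _ _ d => ht d + 1
  | _, _, .rand _ _ _ d e => max (ht d) (ht e) + 1
  | _, _, .lor _ _ _ _ d e => max (ht d) (ht e) + 1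
  | _, _, .ror₁ _ _ _ d => ht d + 1
  | _, _, .ror₂ _ _ _ d => ht d + 1
  | _, _, .limp _ _ _ _ d e => max (ht d) (ht e) + 1
  | _, _, .rimp _ _ _ d => ht d + 1
  | _, _, .m _ _ _ d => ht d + 1

lemma ht_pos {Γ : Multiset Fm} {δ : Fm} (d : D Γ δ) : 1 ≤ ht d := by
  cases d <;> simp [ht]

/-- Inversion: the right premise of `L→` is invertible. -/
lemma inv {Γ : Multiset Fm} {δ : Fm} (d : D Γ δ) :
    ∀ (α β : Fm) (Γ₀ : Multiset Fm), Γ = Fm.imp α β ::ₘ Γ₀ →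
      Nonempty (D (β ::ₘ Γ₀) δ) := by
  induction d with
  | ax Γ p =>
    intro α β Γ₀ h
    obtain ⟨cs, -, h2⟩ := cons_decomp h (fun he => by cases he)
    subst h2
    exact ⟨exch (sw _ _ _) (D.ax _ p)⟩
  | lbot Γ φ =>
    intro α β Γ₀ h
    obtain ⟨cs, -, h2⟩ := cons_decomp h (fun he => by cases he)
    subst h2
    exact ⟨exch (sw _ _ _) (D.lbot _ φ)⟩
  | land Γ φ ψ θ d IH =>
    intro α β Γ₀ h
    obtain ⟨cs, h1, h2⟩ := cons_decomp h (fun he => by cases he)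
    subst h1; subst h2
    obtain ⟨r⟩ := IH α β (φ ::ₘ ψ ::ₘ cs) (rot3 (Fm.imp α β) φ ψ cs).symm
    exact ⟨exch (sw _ _ _) (D.land _ _ _ _ (exch (rot3 β φ ψ cs) r))⟩
  | rand Γ φ ψ d e IH1 IH2 =>
    intro α β Γ₀ h
    subst h
    obtain ⟨r1⟩ := IH1 α β Γ₀ rfl
    obtain ⟨r2⟩ := IH2 α β Γ₀ rfl
    exact ⟨D.rand _ _ _ r1 r2⟩
  | lor Γ φ ψ θ d e IH1 IH2 =>
    intro α β Γ₀ h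
    obtain ⟨cs, h1, h2⟩ := cons_decomp h (fun he => by cases he)
    subst h1; subst h2
    obtain ⟨r1⟩ := IH1 α β (φ ::ₘ cs) (sw φ _ cs)
    obtain ⟨r2⟩ := IH2 α β (ψ ::ₘ cs) (sw ψ _ cs)
    exact ⟨exch (sw _ _ _) (D.lor _ _ _ _ (exch (sw _ _ _) r1) (exch (sw _ _ _) r2))⟩
  | ror₁ Γ φ ψ d IH =>
    intro α β Γ₀ h; subst h
    obtain ⟨r⟩ := IH α β Γ₀ rfl
    exact ⟨D.ror₁ _ _ _ r⟩
  | ror₂ Γ φ ψ d IH =>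
    intro α β Γ₀ h; subst h
    obtain ⟨r⟩ := IH α β Γ₀ rfl
    exact ⟨D.ror₂ _ _ _ r⟩
  | limp Γ φ ψ θ d e IH1 IH2 =>
    intro α β Γ₀ h
    rcases Multiset.cons_eq_cons.mp h with ⟨h1, h2⟩ | ⟨hne, cs, h1, h2⟩
    · injection h1 with ha hb
      subst ha; subst hb; subst h2
      exact ⟨e⟩
    · subst h1; subst h2
      obtain ⟨r1⟩ := IH1 α β (Fm.imp φ ψ ::ₘ cs) (sw (Fm.imp φ ψ) _ cs)
      obtain ⟨r2⟩ := IH2 α β (ψ ::ₘ cs) (sw ψ _ cs)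
      exact ⟨exch (sw _ _ _)
        (D.limp (β ::ₘ cs) φ ψ θ (exch (sw _ _ _) r1) (exch (sw _ _ _) r2))⟩
  | rimp Γ φ ψ d IH =>
    intro α β Γ₀ h; subst h
    obtain ⟨r⟩ := IH α β (φ ::ₘ Γ₀) (sw φ _ Γ₀)
    exact ⟨D.rimp _ _ _ (exch (sw _ _ _) r)⟩
  | m Γ φ ψ d _ =>
    intro α β Γ₀ h
    obtain ⟨cs, -, h2⟩ := cons_decomp h (fun he => by cases he)
    subst h2
    exact ⟨exch (sw _ _ _) (D.m (β ::ₘ cs) φ ψ d)⟩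

/-- Main repair lemma: a derivation ending in `L→` can be replaced by a
sensible strict one, by induction on the height of the left premise. -/
lemma aux : ∀ (n : ℕ) (Γ' : Multiset Fm) (φ ψ δ : Fm)
    (d1 : D (Fm.imp φ ψ ::ₘ Γ') φ) (d2 : D (ψ ::ₘ Γ') δ),
    Irred (Fm.imp φ ψ ::ₘ Γ') → ht d1 ≤ n →
    ∃ d : D (Fm.imp φ ψ ::ₘ Γ') δ, Sensible d ∧ Strict d := by
  intro n
  induction n with
  | zero =>
    intro _ _ _ _ d1 _ _ hn
    exact absurd hn (by have := ht_pos d1; omega)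
  | succ n IH =>
    intro Γ' φ ψ δ d1 d2 hIrr hn
    cases φ with
    | bot =>
      exact ⟨D.limp Γ' _ ψ δ d1 d2,
        sensible_limp _ _ _ _ _ _ (fun p h => by simp at h),
        strict_limp _ _ _ _ _ _ (fun hx => by obtain ⟨χ', h⟩ := hx; simp at h)⟩
    | and a b =>
      exact ⟨D.limp Γ' _ ψ δ d1 d2,
        sensible_limp _ _ _ _ _ _ (fun p h => by simp at h),
        strict_limp _ _ _ _ _ _ (fun hx => by obtain ⟨χ', h⟩ := hx; simp at h)⟩
    | or a b =>
      exact ⟨D.limp Γ' _ ψ δ d1 d2,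
        sensible_limp _ _ _ _ _ _ (fun p h => by simp at h),
        strict_limp _ _ _ _ _ _ (fun hx => by obtain ⟨χ', h⟩ := hx; simp at h)⟩
    | imp a b =>
      exact ⟨D.limp Γ' _ ψ δ d1 d2,
        sensible_limp _ _ _ _ _ _ (fun p h => by simp at h),
        strict_limp _ _ _ _ _ _ (fun hx => by obtain ⟨χ', h⟩ := hx; simp at h)⟩
    | atom p =>
      generalize hA : Fm.imp (Fm.atom p) ψ ::ₘ Γ' = A at d1 hn
      cases d1 with
      | ax Γ1 =>
        exfalso
        have hp : Fm.atom p ∈ Fm.imp (Fm.atom p) ψ ::ₘ Γ' := by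
          rw [hA]; exact Multiset.mem_cons_self _ _
        rcases Multiset.mem_cons.mp hp with h | h
        · cases h
        · exact hIrr.2.2.2 p ψ ⟨Multiset.mem_cons_of_mem h, Multiset.mem_cons_self _ _⟩
      | lbot Γ1 =>
        exfalso
        have hb : Fm.bot ∈ Fm.imp (Fm.atom p) ψ ::ₘ Γ' := by
          rw [hA]; exact Multiset.mem_cons_self _ _
        exact hIrr.2.2.1 hb
      | land Γ1 a b d =>
        exfalso
        have hb : Fm.and a b ∈ Fm.imp (Fm.atom p) ψ ::ₘ Γ' := by
          rw [hA]; exact Multiset.mem_cons_self _ _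
        exact hIrr.1 a b hb
      | lor Γ1 a b d e =>
        exfalso
        have hb : Fm.or a b ∈ Fm.imp (Fm.atom p) ψ ::ₘ Γ' := by
          rw [hA]; exact Multiset.mem_cons_self _ _
        exact hIrr.2.1 a b hb
      | limp Γ1 α β _ e1 e2 =>
        simp only [ht] at hn
        have hb1 : ht e1 ≤ n := by
          have := le_max_left (ht e1) (ht e2); omega
        rcases Multiset.cons_eq_cons.mp hA.symm with ⟨h1, h2⟩ | ⟨hne, cs, h1, h2⟩
        · injection h1 with ha hbb
          subst ha; subst hbb; subst h2
          exact IH _ _ _ _ e1 d2 hIrr hb1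
        · subst h1; subst h2
          rw [sw (Fm.imp (Fm.atom p) ψ) (Fm.imp α β) cs] at hIrr
          obtain ⟨g2⟩ := inv d2 α β (ψ ::ₘ cs) (sw ψ _ cs)
          refine IH (Fm.imp (Fm.atom p) ψ ::ₘ cs) α β δ e1 ?_ hIrr hb1
          exact exch (sw _ _ _)
            (D.limp (β ::ₘ cs) (Fm.atom p) ψ δ (exch (sw _ _ _) e2)
              (exch (sw _ _ _) g2))
    | box χ =>
      generalize hA : Fm.imp (Fm.box χ) ψ ::ₘ Γ' = A at d1 hn
      cases d1 with
      | lbot Γ1 =>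
        exfalso
        have hb : Fm.bot ∈ Fm.imp (Fm.box χ) ψ ::ₘ Γ' := by
          rw [hA]; exact Multiset.mem_cons_self _ _
        exact hIrr.2.2.1 hb
      | land Γ1 a b d =>
        exfalso
        have hb : Fm.and a b ∈ Fm.imp (Fm.box χ) ψ ::ₘ Γ' := by
          rw [hA]; exact Multiset.mem_cons_self _ _
        exact hIrr.1 a b hb
      | lor Γ1 a b d e =>
        exfalso
        have hb : Fm.or a b ∈ Fm.imp (Fm.box χ) ψ ::ₘ Γ' := by
          rw [hA]; exact Multiset.mem_cons_self _ _
        exact hIrr.2.1 a b hb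
      | m Γ1 φ1 _ dm =>
        rw [← hA]
        refine ⟨D.limp Γ' (Fm.box χ) ψ δ (exch hA.symm (D.m Γ1 φ1 χ dm)) d2,
          sensible_limp _ _ _ _ _ _ (fun p h => by simp at h),
          strict_limp _ _ _ _ _ _ (fun _ => ?_)⟩
        exact exch_endsAxM hA.symm _ trivial
      | limp Γ1 α β _ e1 e2 =>
        simp only [ht] at hn
        have hb1 : ht e1 ≤ n := by
          have := le_max_left (ht e1) (ht e2); omega
        rcases Multiset.cons_eq_cons.mp hA.symm with ⟨h1, h2⟩ | ⟨hne, cs, h1, h2⟩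
        · injection h1 with ha hbb
          subst ha; subst hbb; subst h2
          exact IH _ _ _ _ e1 d2 hIrr hb1
        · subst h1; subst h2
          rw [sw (Fm.imp (Fm.box χ) ψ) (Fm.imp α β) cs] at hIrr
          obtain ⟨g2⟩ := inv d2 α β (ψ ::ₘ cs) (sw ψ _ cs)
          refine IH (Fm.imp (Fm.box χ) ψ ::ₘ cs) α β δ e1 ?_ hIrr hb1
          exact exch (sw _ _ _)
            (D.limp (β ::ₘ cs) (Fm.box χ) ψ δ (exch (sw _ _ _) e2)
              (exch (sw _ _ _) g2))

end SSPAux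

/-- Every irreducible sequent provable in `G3iM^w` has a sensible strict
proof. -/
theorem sensible_strict_proof (Γ : Multiset Fm) (δ : Fm)
    (hIrr : Irred Γ) (h : Nonempty (D Γ δ)) :
    ∃ d : D Γ δ, Sensible d ∧ Strict d := by
  obtain ⟨d⟩ := h
  cases d with
  | limp Γ' φ ψ _ d1 d2 => exact aux (ht d1) Γ' φ ψ δ d1 d2 hIrr le_rfl
  | ax Γ1 p => exact ⟨D.ax Γ1 p, trivial, trivial⟩
  | lbot Γ1 _ => exact ⟨D.lbot Γ1 δ, trivial, trivial⟩
  | land Γ1 φ ψ _ d => exact ⟨D.land Γ1 φ ψ δ d, trivial, trivial⟩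
  | rand _ φ ψ d e => exact ⟨D.rand Γ φ ψ d e, trivial, trivial⟩
  | lor Γ1 φ ψ _ d e => exact ⟨D.lor Γ1 φ ψ δ d e, trivial, trivial⟩
  | ror₁ _ φ ψ d => exact ⟨D.ror₁ Γ φ ψ d, trivial, trivial⟩
  | ror₂ _ φ ψ d => exact ⟨D.ror₂ Γ φ ψ d, trivial, trivial⟩
  | rimp _ φ ψ d => exact ⟨D.rimp Γ φ ψ d, trivial, trivial⟩
  | m Γ1 φ ψ d => exact ⟨D.m Γ1 φ ψ d, trivial, trivial⟩
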